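/- arXiv:2112.08465 — 3 statements merged into one kernel-verified Lean document; each statement's English description precedes it below -/
import Mathlib

section
/- Let (V,⟨·,·⟩) be a real inner product space of dimension n, and suppose V = V₁ ⊕ V₂ is an orthogonal direct sum with dim V₁ = k ≥ 1 and dim V₂ = n - k ≥ 1. Let R be an algebraic curvature tensor on V such that R(x,y,z,w) = 0 whenever x ∈ V₁ and y ∈ V₂ (so R is the curvature tensor of a Riemannian product). If R has (k(n-k)+1)-nonnegative curvature operator of the second kind, then R vanishes identically. -/
open scoped RealInnerProductSpace

variable {V : Type*} [NormedAddCommGroup V] [InnerProductSpace ℝ V]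

/-- `R` is an algebraic curvature tensor: antisymmetric in the first two slots,
symmetric under exchange of the first and second pairs, and satisfying the
first Bianchi identity. -/
def IsAlgCurvatureTensor (R : V →ₗ[ℝ] V →ₗ[ℝ] V →ₗ[ℝ] V →ₗ[ℝ] ℝ) : Prop :=
  (∀ x y z w : V, R x y z w = - R y x z w) ∧
  (∀ x y z w : V, R x y z w = R z w x y) ∧
  (∀ x y z w : V, R x y z w + R y z x w + R z x y w = 0)

/-- The Ricci curvature `Ric(x,y) = Σ_j R(x,e_j,y,e_j)` with respect to an
orthonormal basis. -/
noncomputable def ricci {n : ℕ} (b : OrthonormalBasis (Fin n) ℝ V)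
    (R : V →ₗ[ℝ] V →ₗ[ℝ] V →ₗ[ℝ] V →ₗ[ℝ] ℝ) (x y : V) : ℝ :=
  ∑ j, R x (b j) y (b j)

/-- The scalar curvature `S = Σ_{i,j} R_{ijij}`. -/
noncomputable def scalarCurv {n : ℕ} (b : OrthonormalBasis (Fin n) ℝ V)
    (R : V →ₗ[ℝ] V →ₗ[ℝ] V →ₗ[ℝ] V →ₗ[ℝ] ℝ) : ℝ :=
  ∑ i, ∑ j, R (b i) (b j) (b i) (b j)

/-- `φ` is a symmetric bilinear form which is traceless with respect to the
orthonormal basis `b`. -/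
def IsTracelessSymForm {n : ℕ} (b : OrthonormalBasis (Fin n) ℝ V)
    (φ : V →ₗ[ℝ] V →ₗ[ℝ] ℝ) : Prop :=
  (∀ x y : V, φ x y = φ y x) ∧ (∑ i, φ (b i) (b i) = 0)

/-- The inner product `⟨φ,ψ⟩ = Σ_{i,j} φ(e_i,e_j) ψ(e_i,e_j)` of bilinear forms. -/
noncomputable def formInner {n : ℕ} (b : OrthonormalBasis (Fin n) ℝ V)
    (φ ψ : V →ₗ[ℝ] V →ₗ[ℝ] ℝ) : ℝ :=
  ∑ i, ∑ j, φ (b i) (b j) * ψ (b i) (b j)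

/-- The curvature operator of the second kind
`R̊(φ,ψ) = Σ_{i,j,k,l} R_{ijkl} φ(e_i,e_l) ψ(e_j,e_k)`. -/
noncomputable def secondKind {n : ℕ} (b : OrthonormalBasis (Fin n) ℝ V)
    (R : V →ₗ[ℝ] V →ₗ[ℝ] V →ₗ[ℝ] V →ₗ[ℝ] ℝ)
    (φ ψ : V →ₗ[ℝ] V →ₗ[ℝ] ℝ) : ℝ :=
  ∑ i, ∑ j, ∑ k, ∑ l,
    R (b i) (b j) (b k) (b l) * φ (b i) (b l) * ψ (b j) (b k)

/-- `R` has `k`-nonnegative curvature operator of the second kind: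
`Σ_{a=1}^k R̊(φ_a,φ_a) ≥ 0` for every orthonormal `k`-tuple of traceless
symmetric bilinear forms. -/
def kNonnegSecondKind {n : ℕ} (b : OrthonormalBasis (Fin n) ℝ V)
    (R : V →ₗ[ℝ] V →ₗ[ℝ] V →ₗ[ℝ] V →ₗ[ℝ] ℝ) (k : ℕ) : Prop :=
  ∀ φ : Fin k → (V →ₗ[ℝ] V →ₗ[ℝ] ℝ),
    (∀ a, IsTracelessSymForm b (φ a)) →
    (∀ a a', formInner b (φ a) (φ a') = if a = a' then 1 else 0) →
    0 ≤ ∑ a, secondKind b R (φ a) (φ a)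

/-- `R` has `k`-positive curvature operator of the second kind:
`Σ_{a=1}^k R̊(φ_a,φ_a) > 0` for every orthonormal `k`-tuple of traceless
symmetric bilinear forms. -/
def kPosSecondKind {n : ℕ} (b : OrthonormalBasis (Fin n) ℝ V)
    (R : V →ₗ[ℝ] V →ₗ[ℝ] V →ₗ[ℝ] V →ₗ[ℝ] ℝ) (k : ℕ) : Prop :=
  ∀ φ : Fin k → (V →ₗ[ℝ] V →ₗ[ℝ] ℝ),
    (∀ a, IsTracelessSymForm b (φ a)) →
    (∀ a a', formInner b (φ a) (φ a') = if a = a' then 1 else 0) →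
    0 < ∑ a, secondKind b R (φ a) (φ a)

namespace Stmt16


noncomputable def sf (x y : V) : V →ₗ[ℝ] V →ₗ[ℝ] ℝ :=
  LinearMap.mk₂ ℝ (fun a c => ⟪a, x⟫ * ⟪c, y⟫ + ⟪a, y⟫ * ⟪c, x⟫)
    (fun a a' c => by simp [inner_add_left]; ring)
    (fun r a c => by simp [real_inner_smul_left]; ring)
    (fun a c c' => by simp [inner_add_left]; ring)
    (fun r a c => by simp [real_inner_smul_left]; ring)

@[simp] lemma sf_apply (x y a c : V) : sf x y a c = ⟪a, x⟫ * ⟪c, y⟫ + ⟪a, y⟫ * ⟪c, x⟫ := rfl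

variable {n : ℕ} (b : OrthonormalBasis (Fin n) ℝ V)

lemma lin_expandM {M : Type*} [AddCommMonoid M] [Module ℝ M] (f : V →ₗ[ℝ] M) (x : V) :
    f x = ∑ i, ⟪b i, x⟫ • f (b i) := by
  conv_lhs => rw [← b.sum_repr' x]
  rw [map_sum]
  exact Finset.sum_congr rfl fun i _ => by rw [map_smul]

lemma parseval (x y : V) : ∑ i, ⟪b i, x⟫ * ⟪b i, y⟫ = ⟪x, y⟫ := by
  conv_rhs => rw [← b.sum_repr' x]
  rw [sum_inner]
  exact Finset.sum_congr rfl fun i _ => by rw [real_inner_smul_left]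

lemma eval_expand (φ : V →ₗ[ℝ] V →ₗ[ℝ] ℝ) (x y : V) :
    φ x y = ∑ i, ∑ j, ⟪b i, x⟫ * ⟪b j, y⟫ * φ (b i) (b j) := by
  rw [lin_expandM b φ x, LinearMap.sum_apply]
  refine Finset.sum_congr rfl fun i _ => ?_
  rw [LinearMap.smul_apply, lin_expandM b (φ (b i)) y, Finset.smul_sum]
  exact Finset.sum_congr rfl fun j _ => by simp [smul_eq_mul]; ring

lemma R_expand (R : V →ₗ[ℝ] V →ₗ[ℝ] V →ₗ[ℝ] V →ₗ[ℝ] ℝ) (x y z w : V) :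
    R x y z w = ∑ i, ∑ j, ∑ k, ∑ l,
      ⟪b i, x⟫ * ⟪b j, y⟫ * ⟪b k, z⟫ * ⟪b l, w⟫ * R (b i) (b j) (b k) (b l) := by
  rw [lin_expandM b R x]
  simp only [LinearMap.sum_apply, LinearMap.smul_apply]
  refine Finset.sum_congr rfl fun i _ => ?_
  rw [lin_expandM b (R (b i)) y]
  simp only [LinearMap.sum_apply, LinearMap.smul_apply, Finset.smul_sum]
  refine Finset.sum_congr rfl fun j _ => ?_
  rw [lin_expandM b (R (b i) (b j)) z]
  simp only [LinearMap.sum_apply, LinearMap.smul_apply, Finset.smul_sum]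
  refine Finset.sum_congr rfl fun k _ => ?_
  rw [lin_expandM b (R (b i) (b j) (b k)) w]
  simp only [Finset.smul_sum]
  exact Finset.sum_congr rfl fun l _ => by simp only [smul_eq_mul]; ring

lemma trace_sf (x y : V) : ∑ i, sf x y (b i) (b i) = 2 * ⟪x, y⟫ := by
  simp only [sf_apply]
  rw [Finset.sum_add_distrib, parseval, parseval]
  rw [real_inner_comm y x]; ring

lemma formInner_comm (φ ψ : V →ₗ[ℝ] V →ₗ[ℝ] ℝ) : formInner b φ ψ = formInner b ψ φ := by
  unfold formInner
  exact Finset.sum_congr rfl fun i _ => Finset.sum_congr rfl fun j _ => mul_comm _ _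

lemma formInner_smul_left (c : ℝ) (φ ψ : V →ₗ[ℝ] V →ₗ[ℝ] ℝ) :
    formInner b (c • φ) ψ = c * formInner b φ ψ := by
  unfold formInner
  simp only [LinearMap.smul_apply, smul_eq_mul, Finset.mul_sum]
  exact Finset.sum_congr rfl fun i _ => Finset.sum_congr rfl fun j _ => by ring

lemma formInner_smul_right (c : ℝ) (φ ψ : V →ₗ[ℝ] V →ₗ[ℝ] ℝ) :
    formInner b φ (c • ψ) = c * formInner b φ ψ := by
  rw [formInner_comm, formInner_smul_left, formInner_comm]

lemma formInner_sf_sf (x y z w : V) :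
    formInner b (sf x y) (sf z w) = 2 * (⟪x, z⟫ * ⟪y, w⟫ + ⟪x, w⟫ * ⟪y, z⟫) := by
  unfold formInner
  simp only [sf_apply]
  have hterm : ∀ i j : Fin n,
      (⟪b i, x⟫ * ⟪b j, y⟫ + ⟪b i, y⟫ * ⟪b j, x⟫) * (⟪b i, z⟫ * ⟪b j, w⟫ + ⟪b i, w⟫ * ⟪b j, z⟫)
      = ⟪b i, x⟫ * ⟪b i, z⟫ * (⟪b j, y⟫ * ⟪b j, w⟫) + ⟪b i, x⟫ * ⟪b i, w⟫ * (⟪b j, y⟫ * ⟪b j, z⟫)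
        + (⟪b i, y⟫ * ⟪b i, z⟫ * (⟪b j, x⟫ * ⟪b j, w⟫)
        + ⟪b i, y⟫ * ⟪b i, w⟫ * (⟪b j, x⟫ * ⟪b j, z⟫)) := fun i j => by ring
  simp only [hterm, Finset.sum_add_distrib, ← Finset.mul_sum, parseval, ← Finset.sum_mul]
  ring

lemma formInner_sf_right (φ : V →ₗ[ℝ] V →ₗ[ℝ] ℝ) (x y : V) :
    formInner b φ (sf x y) = φ x y + φ y x := by
  unfold formInner
  simp only [sf_apply]
  have hterm : ∀ i j : Fin n,
      φ (b i) (b j) * (⟪b i, x⟫ * ⟪b j, y⟫ + ⟪b i, y⟫ * ⟪b j, x⟫)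
      = ⟪b i, x⟫ * ⟪b j, y⟫ * φ (b i) (b j) + ⟪b i, y⟫ * ⟪b j, x⟫ * φ (b i) (b j) :=
    fun i j => by ring
  simp only [hterm, Finset.sum_add_distrib]
  rw [← eval_expand, ← eval_expand]

lemma sk_sf_sf (R : V →ₗ[ℝ] V →ₗ[ℝ] V →ₗ[ℝ] V →ₗ[ℝ] ℝ) (x y z w : V) :
    secondKind b R (sf x y) (sf z w)
      = R x z w y + R x w z y + R y z w x + R y w z x := by
  unfold secondKind
  simp only [sf_apply]
  have hterm : ∀ i j k l : Fin n,
      R (b i) (b j) (b k) (b l) * (⟪b i, x⟫ * ⟪b l, y⟫ + ⟪b i, y⟫ * ⟪b l, x⟫)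
        * (⟪b j, z⟫ * ⟪b k, w⟫ + ⟪b j, w⟫ * ⟪b k, z⟫)
      = ⟪b i, x⟫ * ⟪b j, z⟫ * ⟪b k, w⟫ * ⟪b l, y⟫ * R (b i) (b j) (b k) (b l)
        + ⟪b i, x⟫ * ⟪b j, w⟫ * ⟪b k, z⟫ * ⟪b l, y⟫ * R (b i) (b j) (b k) (b l)
        + (⟪b i, y⟫ * ⟪b j, z⟫ * ⟪b k, w⟫ * ⟪b l, x⟫ * R (b i) (b j) (b k) (b l)
        + ⟪b i, y⟫ * ⟪b j, w⟫ * ⟪b k, z⟫ * ⟪b l, x⟫ * R (b i) (b j) (b k) (b l)) :=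
    fun i j k l => by ring
  simp only [hterm, Finset.sum_add_distrib]
  rw [← R_expand, ← R_expand, ← R_expand, ← R_expand]
  ring

lemma sk_zero_left (R : V →ₗ[ℝ] V →ₗ[ℝ] V →ₗ[ℝ] V →ₗ[ℝ] ℝ) (ψ : V →ₗ[ℝ] V →ₗ[ℝ] ℝ) :
    secondKind b R 0 ψ = 0 := by
  unfold secondKind
  simp

lemma sk_zero_right (R : V →ₗ[ℝ] V →ₗ[ℝ] V →ₗ[ℝ] V →ₗ[ℝ] ℝ) (ψ : V →ₗ[ℝ] V →ₗ[ℝ] ℝ) :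
    secondKind b R ψ 0 = 0 := by
  unfold secondKind
  simp

lemma sk_add_left (R : V →ₗ[ℝ] V →ₗ[ℝ] V →ₗ[ℝ] V →ₗ[ℝ] ℝ) (φ₁ φ₂ ψ : V →ₗ[ℝ] V →ₗ[ℝ] ℝ) :
    secondKind b R (φ₁ + φ₂) ψ = secondKind b R φ₁ ψ + secondKind b R φ₂ ψ := by
  unfold secondKind
  simp only [LinearMap.add_apply, mul_add, add_mul, Finset.sum_add_distrib]

lemma sk_add_right (R : V →ₗ[ℝ] V →ₗ[ℝ] V →ₗ[ℝ] V →ₗ[ℝ] ℝ) (φ ψ₁ ψ₂ : V →ₗ[ℝ] V →ₗ[ℝ] ℝ) :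
    secondKind b R φ (ψ₁ + ψ₂) = secondKind b R φ ψ₁ + secondKind b R φ ψ₂ := by
  unfold secondKind
  simp only [LinearMap.add_apply, mul_add, add_mul, Finset.sum_add_distrib]

lemma sk_smul_left (R : V →ₗ[ℝ] V →ₗ[ℝ] V →ₗ[ℝ] V →ₗ[ℝ] ℝ) (c : ℝ) (φ ψ : V →ₗ[ℝ] V →ₗ[ℝ] ℝ) :
    secondKind b R (c • φ) ψ = c * secondKind b R φ ψ := by
  unfold secondKind
  simp only [LinearMap.smul_apply, smul_eq_mul, Finset.mul_sum]
  exact Finset.sum_congr rfl fun i _ => Finset.sum_congr rfl fun j _ =>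
    Finset.sum_congr rfl fun k _ => Finset.sum_congr rfl fun l _ => by ring

lemma sk_smul_right (R : V →ₗ[ℝ] V →ₗ[ℝ] V →ₗ[ℝ] V →ₗ[ℝ] ℝ) (c : ℝ) (φ ψ : V →ₗ[ℝ] V →ₗ[ℝ] ℝ) :
    secondKind b R φ (c • ψ) = c * secondKind b R φ ψ := by
  unfold secondKind
  simp only [LinearMap.smul_apply, smul_eq_mul, Finset.mul_sum]
  exact Finset.sum_congr rfl fun i _ => Finset.sum_congr rfl fun j _ =>
    Finset.sum_congr rfl fun k _ => Finset.sum_congr rfl fun l _ => by ring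

lemma sk_sub_left (R : V →ₗ[ℝ] V →ₗ[ℝ] V →ₗ[ℝ] V →ₗ[ℝ] ℝ) (φ₁ φ₂ ψ : V →ₗ[ℝ] V →ₗ[ℝ] ℝ) :
    secondKind b R (φ₁ - φ₂) ψ = secondKind b R φ₁ ψ - secondKind b R φ₂ ψ := by
  have h : φ₁ - φ₂ = φ₁ + (-1 : ℝ) • φ₂ := by ext x y; simp; ring
  rw [h, sk_add_left, sk_smul_left]; ring

lemma sk_sub_right (R : V →ₗ[ℝ] V →ₗ[ℝ] V →ₗ[ℝ] V →ₗ[ℝ] ℝ) (φ ψ₁ ψ₂ : V →ₗ[ℝ] V →ₗ[ℝ] ℝ) :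
    secondKind b R φ (ψ₁ - ψ₂) = secondKind b R φ ψ₁ - secondKind b R φ ψ₂ := by
  have h : ψ₁ - ψ₂ = ψ₁ + (-1 : ℝ) • ψ₂ := by ext x y; simp; ring
  rw [h, sk_add_right, sk_smul_right]; ring

lemma sk_sum_left (R : V →ₗ[ℝ] V →ₗ[ℝ] V →ₗ[ℝ] V →ₗ[ℝ] ℝ) {K : ℕ}
    (f : Fin K → (V →ₗ[ℝ] V →ₗ[ℝ] ℝ)) (ψ : V →ₗ[ℝ] V →ₗ[ℝ] ℝ) :
    secondKind b R (∑ p, f p) ψ = ∑ p, secondKind b R (f p) ψ := by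
  classical
  induction (Finset.univ : Finset (Fin K)) using Finset.induction_on with
  | empty => simp [sk_zero_left]
  | insert _ _ h ih => rw [Finset.sum_insert h, Finset.sum_insert h, sk_add_left, ih]

lemma sk_sum_right (R : V →ₗ[ℝ] V →ₗ[ℝ] V →ₗ[ℝ] V →ₗ[ℝ] ℝ) {K : ℕ}
    (f : Fin K → (V →ₗ[ℝ] V →ₗ[ℝ] ℝ)) (ψ : V →ₗ[ℝ] V →ₗ[ℝ] ℝ) :
    secondKind b R ψ (∑ p, f p) = ∑ p, secondKind b R ψ (f p) := by
  classical
  induction (Finset.univ : Finset (Fin K)) using Finset.induction_on with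
  | empty => simp [sk_zero_right]
  | insert _ _ h ih => rw [Finset.sum_insert h, Finset.sum_insert h, sk_add_right, ih]


variable {R : V →ₗ[ℝ] V →ₗ[ℝ] V →ₗ[ℝ] V →ₗ[ℝ] ℝ}

lemma Rxx (hR : IsAlgCurvatureTensor R) (x z w : V) : R x x z w = 0 := by
  have h := hR.1 x x z w; linarith

lemma antisym2 (hR : IsAlgCurvatureTensor R) (x y z w : V) : R x y z w = - R x y w z := by
  rw [hR.2.1 x y z w, hR.1 z w x y, hR.2.1 w z x y]

lemma Rzz (hR : IsAlgCurvatureTensor R) (x y z : V) : R x y z z = 0 := by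
  have h := antisym2 hR x y z z; linarith

lemma Ryxyx (hR : IsAlgCurvatureTensor R) (x y : V) : R y x y x = R x y x y := by
  rw [hR.1 y x y x, antisym2 hR x y y x]; ring_nf

lemma sk_sf_diag (hR : IsAlgCurvatureTensor R) (b : OrthonormalBasis (Fin n) ℝ V) (x y : V) :
    secondKind b R (sf x y) (sf x y) = 2 * R x y x y := by
  rw [sk_sf_sf]
  linarith [Rxx hR x y y, Rxx hR y y x, Ryxyx hR x y, Rzz hR x x y, Rxx hR x (y:V) y,
    Rzz hR y y x, Rxx hR y x x]

lemma lemA {n k m : ℕ} (b : OrthonormalBasis (Fin n) ℝ V)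
    (hR : IsAlgCurvatureTensor R)
    (u : Fin k → V) (v : Fin m → V)
    (hu : ∀ p p', ⟪u p, u p'⟫ = if p = p' then 1 else 0)
    (hv : ∀ q q', ⟪v q, v q'⟫ = if q = q' then 1 else 0)
    (huv : ∀ p q, ⟪u p, v q⟫ = 0)
    (hmix : ∀ p q (z w : V), R (u p) (v q) z w = 0)
    (hnn : kNonnegSecondKind b R (k * m + 1))
    (φ : V →ₗ[ℝ] V →ₗ[ℝ] ℝ)
    (hsym : ∀ x y, φ x y = φ y x)
    (htr : ∑ i, φ (b i) (b i) = 0)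
    (hblock : ∀ p q, φ (u p) (v q) = 0) :
    0 ≤ secondKind b R φ φ := by
  classical
  by_cases h0 : formInner b φ φ = 0
  · have hnn' : ∀ i ∈ (Finset.univ : Finset (Fin n)),
        0 ≤ ∑ j, φ (b i) (b j) * φ (b i) (b j) :=
      fun i _ => Finset.sum_nonneg fun j _ => mul_self_nonneg _
    have h1 := (Finset.sum_eq_zero_iff_of_nonneg hnn').mp h0
    have hcomp : ∀ i j, φ (b i) (b j) = 0 := by
      intro i j
      have h2 := (Finset.sum_eq_zero_iff_of_nonneg
        (fun j _ => mul_self_nonneg (φ (b i) (b j)))).mp (h1 i (Finset.mem_univ i)) j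
        (Finset.mem_univ j)
      exact mul_self_eq_zero.mp h2
    have : secondKind b R φ φ = 0 := by
      unfold secondKind
      refine Finset.sum_eq_zero fun i _ => Finset.sum_eq_zero fun j _ =>
        Finset.sum_eq_zero fun k' _ => Finset.sum_eq_zero fun l _ => ?_
      rw [hcomp i l, mul_zero, zero_mul]
    rw [this]
  · have hFnn : 0 ≤ formInner b φ φ :=
      Finset.sum_nonneg fun i _ => Finset.sum_nonneg fun j _ => mul_self_nonneg _
    have hF : 0 < formInner b φ φ := lt_of_le_of_ne hFnn (Ne.symm h0)
    set F := formInner b φ φ with hFdef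
    have hsF : 0 < Real.sqrt F := Real.sqrt_pos.mpr hF
    set c : ℝ := (Real.sqrt F)⁻¹ with hcdef
    have hc : 0 < c := inv_pos.mpr hsF
    have hc2 : c * (c * F) = 1 := by
      rw [hcdef, ← mul_assoc, ← Real.sqrt_mul_self hF.le]
      field_simp
      rw [Real.sq_sqrt (Real.sqrt_nonneg _)]
    set c₂ : ℝ := (Real.sqrt 2)⁻¹ with hc2def
    have hs2 : (0:ℝ) < Real.sqrt 2 := Real.sqrt_pos.mpr (by norm_num)
    have hc22 : c₂ * (c₂ * 2) = 1 := by
      rw [hc2def, ← mul_assoc, ← Real.sqrt_mul_self (by norm_num : (0:ℝ) ≤ 2)]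
      field_simp
      rw [Real.sq_sqrt (Real.sqrt_nonneg _)]
    set e := (finProdFinEquiv : Fin k × Fin m ≃ Fin (k * m)) with hedef
    set Φ : Fin (k * m + 1) → (V →ₗ[ℝ] V →ₗ[ℝ] ℝ) :=
      Fin.snoc (fun a => c₂ • sf (u (e.symm a).1) (v (e.symm a).2)) (c • φ) with hΦdef
    have hTS : ∀ a, IsTracelessSymForm b (Φ a) := by
      intro a
      refine Fin.lastCases ?_ ?_ a
      · constructor
        · intro x y
          simp only [hΦdef, Fin.snoc_last, LinearMap.smul_apply, smul_eq_mul, hsym x y]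
        · simp only [hΦdef, Fin.snoc_last, LinearMap.smul_apply, smul_eq_mul,
            ← Finset.mul_sum, htr, mul_zero]
      · intro i
        constructor
        · intro x y
          simp only [hΦdef, Fin.snoc_castSucc, LinearMap.smul_apply, smul_eq_mul, sf_apply]
          ring
        · simp only [hΦdef, Fin.snoc_castSucc, LinearMap.smul_apply, smul_eq_mul,
            ← Finset.mul_sum, trace_sf, huv, mul_zero]
    have hON : ∀ a a', formInner b (Φ a) (Φ a') = if a = a' then 1 else 0 := by
      have hlast : ∀ i : Fin (k * m),
          formInner b (Φ i.castSucc) (Φ (Fin.last (k * m))) = 0 := by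
        intro i
        simp only [hΦdef, Fin.snoc_castSucc, Fin.snoc_last]
        rw [formInner_smul_left, formInner_smul_right, formInner_comm, formInner_sf_right]
        rw [hblock, hsym, hblock]
        ring
      intro a a'
      refine Fin.lastCases ?_ ?_ a
      · refine Fin.lastCases ?_ ?_ a'
        · rw [if_pos rfl]
          simp only [hΦdef, Fin.snoc_last]
          rw [formInner_smul_left, formInner_smul_right, ← hFdef, hc2]
        · intro i
          rw [formInner_comm, hlast i, if_neg (Fin.castSucc_lt_last i).ne']
      · intro i
        refine Fin.lastCases ?_ ?_ a'
        · rw [hlast i, if_neg (Fin.castSucc_lt_last i).ne]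
        · intro i'
          simp only [hΦdef, Fin.snoc_castSucc]
          have hvu : ⟪v (e.symm i).2, u (e.symm i').1⟫ = 0 := by
            rw [real_inner_comm]; exact huv _ _
          rw [formInner_smul_left, formInner_smul_right, formInner_sf_sf, huv, hvu, hu, hv]
          by_cases hii : i = i'
          · subst hii
            rw [if_pos rfl, if_pos rfl, if_pos rfl]
            linear_combination hc22
          · rw [if_neg (fun h => hii (Fin.castSucc_inj.mp h))]
            have h1 : e.symm i ≠ e.symm i' := fun hh => hii (e.symm.injective hh)
            by_cases hp : (e.symm i).1 = (e.symm i').1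
            · have hq : (e.symm i).2 ≠ (e.symm i').2 := fun hq => h1 (Prod.ext hp hq)
              rw [if_pos hp, if_neg hq]; ring
            · rw [if_neg hp]; ring
    have h := hnn Φ hTS hON
    rw [Fin.sum_univ_castSucc] at h
    simp only [hΦdef, Fin.snoc_castSucc, Fin.snoc_last] at h
    have hmixzero : ∀ i : Fin (k * m),
        secondKind b R (c₂ • sf (u (e.symm i).1) (v (e.symm i).2))
          (c₂ • sf (u (e.symm i).1) (v (e.symm i).2)) = 0 := by
      intro i
      rw [sk_smul_left, sk_smul_right, sk_sf_sf]
      rw [Rxx hR, Rzz hR, hmix]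
      have h5 : R (v (e.symm i).2) (u (e.symm i).1) (v (e.symm i).2) (u (e.symm i).1) = 0 := by
        rw [hR.1, hmix]; ring
      rw [h5]; ring
    rw [Finset.sum_congr rfl (fun i _ => hmixzero i)] at h
    rw [Finset.sum_const_zero, zero_add, sk_smul_left, sk_smul_right] at h
    nlinarith [h, hc, mul_pos hc hc]

lemma secA {n k m : ℕ} (b : OrthonormalBasis (Fin n) ℝ V) (hR : IsAlgCurvatureTensor R)
    (u : Fin k → V) (v : Fin m → V)
    (hu : ∀ p p', ⟪u p, u p'⟫ = if p = p' then 1 else 0)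
    (hv : ∀ q q', ⟪v q, v q'⟫ = if q = q' then 1 else 0)
    (huv : ∀ p q, ⟪u p, v q⟫ = 0)
    (hmix : ∀ p q (z w : V), R (u p) (v q) z w = 0)
    (hnn : kNonnegSecondKind b R (k * m + 1))
    (x y : V) (hxy : ⟪x, y⟫ = 0)
    (hbx : (∀ q, ⟪v q, x⟫ = 0 ∧ ⟪v q, y⟫ = 0) ∨ (∀ p, ⟪u p, x⟫ = 0 ∧ ⟪u p, y⟫ = 0)) :
    0 ≤ R x y x y := by
  have h := lemA b hR u v hu hv huv hmix hnn (sf x y)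
    (fun a c => by simp only [sf_apply]; ring)
    (by rw [trace_sf, hxy, mul_zero])
    (by
      intro p q
      simp only [sf_apply]
      rcases hbx with h | h
      · rw [(h q).2, (h q).1]; ring
      · rw [(h p).1, (h p).2]; ring)
  rw [sk_sf_diag hR] at h
  linarith

set_option maxHeartbeats 1000000 in
lemma secC {n k m : ℕ} (b : OrthonormalBasis (Fin n) ℝ V) (hR : IsAlgCurvatureTensor R)
    (u : Fin k → V) (v : Fin m → V)
    (hu : ∀ p p', ⟪u p, u p'⟫ = if p = p' then 1 else 0)
    (hv : ∀ q q', ⟪v q, v q'⟫ = if q = q' then 1 else 0)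
    (huv : ∀ p q, ⟪u p, v q⟫ = 0)
    (hmix : ∀ p q (z w : V), R (u p) (v q) z w = 0)
    (hnn : kNonnegSecondKind b R (k * m + 1))
    (w : Fin k → V) (w' : Fin m → V)
    (hw : ∀ p p', ⟪w p, w p'⟫ = if p = p' then 1 else 0)
    (hw' : ∀ q q', ⟪w' q, w' q'⟫ = if q = q' then 1 else 0)
    (hvw : ∀ q p, ⟪v q, w p⟫ = 0)
    (huw' : ∀ p q, ⟪u p, w' q⟫ = 0)
    (hmix2 : ∀ p q (z z' : V), R (w p) (w' q) z z' = 0) :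
    (m:ℝ)^2 * (∑ p, ∑ p', R (w p) (w p') (w p) (w p'))
      + (k:ℝ)^2 * (∑ q, ∑ q', R (w' q) (w' q') (w' q) (w' q')) ≤ 0 := by
  classical
  set I₁ : V →ₗ[ℝ] V →ₗ[ℝ] ℝ := ∑ p, sf (w p) (w p) with hI₁
  set I₂ : V →ₗ[ℝ] V →ₗ[ℝ] ℝ := ∑ q, sf (w' q) (w' q) with hI₂
  have happ : ∀ (N : ℕ) (g : Fin N → V) (x y : V),
      (∑ p, sf (g p) (g p)) x y = ∑ p, (⟪x, g p⟫ * ⟪y, g p⟫ + ⟪x, g p⟫ * ⟪y, g p⟫) := by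
    intro N g x y
    simp only [LinearMap.sum_apply, sf_apply]
  set φS : V →ₗ[ℝ] V →ₗ[ℝ] ℝ := (m:ℝ) • I₁ - (k:ℝ) • I₂ with hφS
  have hsymφ : ∀ x y : V, φS x y = φS y x := by
    intro x y
    simp only [hφS, hI₁, hI₂, LinearMap.sub_apply, LinearMap.smul_apply, smul_eq_mul, happ]
    have e1 : ∀ (N : ℕ) (g : Fin N → V),
        ∑ p, (⟪x, g p⟫ * ⟪y, g p⟫ + ⟪x, g p⟫ * ⟪y, g p⟫)
          = ∑ p, (⟪y, g p⟫ * ⟪x, g p⟫ + ⟪y, g p⟫ * ⟪x, g p⟫) :=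
      fun N g => Finset.sum_congr rfl fun p _ => by ring
    rw [e1 k w, e1 m w']
  have tr1 : ∀ (N : ℕ) (g : Fin N → V),
      (∀ p p', ⟪g p, g p'⟫ = if p = p' then 1 else 0) →
      ∑ i, (∑ p, sf (g p) (g p)) (b i) (b i) = 2 * N := by
    intro N g hg
    simp only [LinearMap.sum_apply]
    rw [Finset.sum_comm]
    rw [Finset.sum_congr rfl fun p _ => trace_sf b (g p) (g p)]
    simp [hg, Finset.sum_const, Finset.card_univ, mul_comm]
    have hn1 : ∀ x, ‖g x‖ ^ 2 = 1 := fun x => by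
      rw [← real_inner_self_eq_norm_sq, hg, if_pos rfl]
    simp [hn1]
  have htrφ : ∑ i, φS (b i) (b i) = 0 := by
    simp only [hφS, LinearMap.sub_apply, LinearMap.smul_apply, smul_eq_mul]
    rw [Finset.sum_sub_distrib, ← Finset.mul_sum, ← Finset.mul_sum, hI₁, hI₂,
      tr1 k w hw, tr1 m w' hw']
    ring
  have hblockφ : ∀ p q, φS (u p) (v q) = 0 := by
    intro p q
    simp only [hφS, hI₁, hI₂, LinearMap.sub_apply, LinearMap.smul_apply, smul_eq_mul, happ]
    have z1 : ∑ a, (⟪u p, w a⟫ * ⟪v q, w a⟫ + ⟪u p, w a⟫ * ⟪v q, w a⟫) = 0 :=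
      Finset.sum_eq_zero fun a _ => by rw [hvw]; ring
    have z2 : ∑ a, (⟪u p, w' a⟫ * ⟪v q, w' a⟫ + ⟪u p, w' a⟫ * ⟪v q, w' a⟫) = 0 :=
      Finset.sum_eq_zero fun a _ => by rw [huw']; ring
    rw [z1, z2]; ring
  have e11 : secondKind b R I₁ I₁ = -4 * (∑ p, ∑ p', R (w p) (w p') (w p) (w p')) := by
    rw [hI₁, sk_sum_left, Finset.mul_sum]
    refine Finset.sum_congr rfl fun p _ => ?_
    rw [sk_sum_right, Finset.mul_sum]
    refine Finset.sum_congr rfl fun p' _ => ?_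
    rw [sk_sf_sf]
    have h1 := antisym2 hR (w p) (w p') (w p) (w p')
    linarith
  have e22 : secondKind b R I₂ I₂ = -4 * (∑ q, ∑ q', R (w' q) (w' q') (w' q) (w' q')) := by
    rw [hI₂, sk_sum_left, Finset.mul_sum]
    refine Finset.sum_congr rfl fun q _ => ?_
    rw [sk_sum_right, Finset.mul_sum]
    refine Finset.sum_congr rfl fun q' _ => ?_
    rw [sk_sf_sf]
    have h1 := antisym2 hR (w' q) (w' q') (w' q) (w' q')
    linarith
  have e12 : secondKind b R I₁ I₂ = 0 := by
    rw [hI₁, sk_sum_left]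
    refine Finset.sum_eq_zero fun p _ => ?_
    rw [hI₂, sk_sum_right]
    refine Finset.sum_eq_zero fun q _ => ?_
    rw [sk_sf_sf]
    simp only [hmix2]
    ring
  have e21 : secondKind b R I₂ I₁ = 0 := by
    rw [hI₂, sk_sum_left]
    refine Finset.sum_eq_zero fun q _ => ?_
    rw [hI₁, sk_sum_right]
    refine Finset.sum_eq_zero fun p _ => ?_
    rw [sk_sf_sf, hR.1 (w' q) (w p) (w p) (w' q), hmix2 p q (w p) (w' q)]
    ring
  have h := lemA b hR u v hu hv huv hmix hnn φS hsymφ htrφ hblockφ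
  rw [hφS] at h
  simp only [sk_sub_left, sk_sub_right, sk_smul_left, sk_smul_right, e11, e12, e21, e22] at h
  nlinarith [h]

lemma polarize (hR : IsAlgCurvatureTensor R) (P : Submodule ℝ V)
    (h0 : ∀ x y, x ∈ P → y ∈ P → R x y x y = 0) :
    ∀ x y z w, x ∈ P → y ∈ P → z ∈ P → w ∈ P → R x y z w = 0 := by
  have step1 : ∀ x y z, x ∈ P → y ∈ P → z ∈ P → R x y x z = 0 := by
    intro x y z hx hy hz
    have e := h0 x (y + z) hx (P.add_mem hy hz)
    simp only [map_add, LinearMap.add_apply] at e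
    have e1 := h0 x y hx hy
    have e2 := h0 x z hx hz
    have e3 : R x z x y = R x y x z := by rw [hR.2.1 x z x y]
    linarith
  have step2 : ∀ x y z w, x ∈ P → y ∈ P → z ∈ P → w ∈ P → R x y z w = - R z y x w := by
    intro x y z w hx hy hz hw
    have e := step1 (x + z) y w (P.add_mem hx hz) hy hw
    simp only [map_add, LinearMap.add_apply] at e
    have e1 := step1 x y w hx hy hw
    have e2 := step1 z y w hz hy hw
    linarith
  intro x y z w hx hy hz hw
  have s3a : R x y z w = R y z x w := by
    rw [step2 x y z w hx hy hz hw, hR.1 z y x w]; ring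
  have s3b : R y z x w = R z x y w := by
    rw [step2 y z x w hy hz hx hw, hR.1 x z y w]; ring
  have hb := hR.2.2 x y z w
  linarith

lemma secZ {d : ℕ} [FiniteDimensional ℝ V] (hR : IsAlgCurvatureTensor R)
    (P : Submodule ℝ V) (hdim : Module.finrank ℝ P = d)
    (hA : ∀ x y : V, x ∈ P → y ∈ P → ⟪x, y⟫ = 0 → 0 ≤ R x y x y)
    (hC : ∀ w : Fin d → V, (∀ p, w p ∈ P) →
      (∀ p p', ⟪w p, w p'⟫ = if p = p' then 1 else 0) →
      (∑ p, ∑ p', R (w p) (w p') (w p) (w p')) ≤ 0)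
    (x y : V) (hx : x ∈ P) (hy : y ∈ P) : R x y x y = 0 := by
  classical
  by_cases hx0 : x = 0
  · subst hx0; simp
  set c : ℝ := ⟪x, y⟫ / ⟪x, x⟫ with hcdef
  set y' : V := y - c • x with hy'def
  have hy' : y' ∈ P := P.sub_mem hy (P.smul_mem c hx)
  have hxxne : ⟪x, x⟫ ≠ 0 := fun h => hx0 (inner_self_eq_zero.mp h)
  have hxy' : ⟪x, y'⟫ = 0 := by
    rw [hy'def, inner_sub_right, real_inner_smul_right, hcdef]
    field_simp
    ring
  have hred : R x y x y = R x y' x y' := by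
    have hyy : y = y' + c • x := by rw [hy'def]; abel
    conv_lhs => rw [hyy]
    simp only [map_add, map_smul, LinearMap.add_apply, LinearMap.smul_apply, smul_eq_mul]
    rw [Rzz hR x y' x, Rxx hR x x y', Rxx hR x x x]
    ring
  by_cases hy'0 : y' = 0
  · rw [hred, hy'0]; simp
  have hxx : (0:ℝ) < ⟪x, x⟫ :=
    lt_of_le_of_ne real_inner_self_nonneg (Ne.symm hxxne)
  have hyy' : (0:ℝ) < ⟪y', y'⟫ :=
    lt_of_le_of_ne real_inner_self_nonneg
      (Ne.symm fun h => hy'0 (inner_self_eq_zero.mp h))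
  set a : ℝ := (Real.sqrt ⟪x, x⟫)⁻¹ with hadef
  set a' : ℝ := (Real.sqrt ⟪y', y'⟫)⁻¹ with ha'def
  have ha : a ≠ 0 := inv_ne_zero (Real.sqrt_ne_zero'.mpr hxx)
  have ha' : a' ≠ 0 := inv_ne_zero (Real.sqrt_ne_zero'.mpr hyy')
  set xh : V := a • x with hxhdef
  set yh : V := a' • y' with hyhdef
  have hxh : xh ∈ P := P.smul_mem a hx
  have hyh : yh ∈ P := P.smul_mem a' hy'
  have hnxh : ⟪xh, xh⟫ = 1 := by
    rw [hxhdef, real_inner_smul_left, real_inner_smul_right, hadef,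
      ← Real.sqrt_mul_self hxx.le]
    field_simp
    rw [Real.sq_sqrt (Real.sqrt_nonneg _)]
  have hnyh : ⟪yh, yh⟫ = 1 := by
    rw [hyhdef, real_inner_smul_left, real_inner_smul_right, ha'def,
      ← Real.sqrt_mul_self hyy'.le]
    field_simp
    rw [Real.sq_sqrt (Real.sqrt_nonneg _)]
  have hcross : ⟪xh, yh⟫ = 0 := by
    rw [hxhdef, hyhdef, real_inner_smul_left, real_inner_smul_right, hxy']
    ring
  have hcross' : ⟪yh, xh⟫ = 0 := by rw [real_inner_comm]; exact hcross
  -- dimension at least 2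
  have hd2 : 2 ≤ d := by
    have honf : Orthonormal ℝ (![(⟨xh, hxh⟩ : P), ⟨yh, hyh⟩]) := by
      rw [orthonormal_iff_ite]
      intro i j
      fin_cases i <;> fin_cases j <;>
        simp [Submodule.coe_inner, hnxh, hnyh, hcross, hcross', (by rw [norm_eq_sqrt_real_inner, hnxh, Real.sqrt_one] : ‖xh‖ = 1), (by rw [norm_eq_sqrt_real_inner, hnyh, Real.sqrt_one] : ‖yh‖ = 1)]
    have hli := honf.linearIndependent
    have hcard := hli.fintype_card_le_finrank
    simpa [hdim] using hcard
  obtain ⟨d', rfl⟩ : ∃ d', d = d' + 2 := ⟨d - 2, by omega⟩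
  have h01 : (0 : Fin (d' + 2)) ≠ 1 := by simp [Fin.ext_iff]
  set g : Fin (d' + 2) → P := fun i => if i = 0 then ⟨xh, hxh⟩ else ⟨yh, hyh⟩ with hgdef
  have hgon : Orthonormal ℝ (({0, 1} : Set (Fin (d' + 2))).restrict g) := by
    rw [orthonormal_iff_ite]
    rintro ⟨i, hi⟩ ⟨j, hj⟩
    simp only [Set.mem_insert_iff, Set.mem_singleton_iff] at hi hj
    rcases hi with rfl | rfl <;> rcases hj with rfl | rfl <;>
      simp [hgdef, Set.restrict, h01, h01.symm, Submodule.coe_inner, hnxh, hnyh,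
        hcross, hcross', Subtype.mk.injEq, (by rw [norm_eq_sqrt_real_inner, hnxh, Real.sqrt_one] : ‖xh‖ = 1), (by rw [norm_eq_sqrt_real_inner, hnyh, Real.sqrt_one] : ‖yh‖ = 1)]
  obtain ⟨B, hB⟩ := hgon.exists_orthonormalBasis_extension_of_card_eq
    (by simp [hdim])
  set wf : Fin (d' + 2) → V := fun p => (B p : V) with hwfdef
  have hwmem : ∀ p, wf p ∈ P := fun p => (B p).2
  have hwon : ∀ p p', ⟪wf p, wf p'⟫ = if p = p' then 1 else 0 := by
    intro p p'
    have := (orthonormal_iff_ite.mp B.orthonormal) p p'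
    rw [Submodule.coe_inner] at this
    simpa [hwfdef, Subtype.ext_iff] using this
  have hw0 : wf 0 = xh := by
    have := hB 0 (by simp)
    rw [hwfdef]
    simp only [this, hgdef, if_pos rfl]
  have hw1 : wf 1 = yh := by
    have := hB 1 (by simp)
    rw [hwfdef]
    simp only [this, hgdef, if_neg h01.symm]
  have hterm : ∀ p p', 0 ≤ R (wf p) (wf p') (wf p) (wf p') := by
    intro p p'
    by_cases hpp : p = p'
    · subst hpp; rw [Rxx hR]
    · exact hA _ _ (hwmem p) (hwmem p') (by rw [hwon, if_neg hpp])
  have hS0 : ∑ p, ∑ p', R (wf p) (wf p') (wf p) (wf p') = 0 :=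
    le_antisymm (hC wf hwmem hwon)
      (Finset.sum_nonneg fun p _ => Finset.sum_nonneg fun p' _ => hterm p p')
  have h1 := (Finset.sum_eq_zero_iff_of_nonneg
    (fun p _ => Finset.sum_nonneg fun p' _ => hterm p p')).mp hS0 0 (Finset.mem_univ _)
  have h2 := (Finset.sum_eq_zero_iff_of_nonneg
    (fun p' _ => hterm 0 p')).mp h1 1 (Finset.mem_univ _)
  rw [hw0, hw1, hxhdef, hyhdef] at h2
  simp only [map_smul, LinearMap.smul_apply, smul_eq_mul] at h2
  have h3 : (a * a')^2 * R x y' x y' = 0 := by linear_combination h2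
  have h4 : R x y' x y' = 0 :=
    (mul_eq_zero.mp h3).resolve_left (pow_ne_zero _ (mul_ne_zero ha ha'))
  rw [hred, h4]

end Stmt16

open Stmt16 in
set_option maxHeartbeats 1000000 in
theorem stmt_16 {n k : ℕ}
    (b : OrthonormalBasis (Fin n) ℝ V)
    (V₁ V₂ : Submodule ℝ V)
    (hdim₁ : Module.finrank ℝ V₁ = k) (hk : 1 ≤ k)
    (hdim₂ : Module.finrank ℝ V₂ = n - k) (hnk : 1 ≤ n - k)
    (horth : ∀ x ∈ V₁, ∀ y ∈ V₂, ⟪x, y⟫ = 0)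
    (hsup : V₁ ⊔ V₂ = ⊤)
    (R : V →ₗ[ℝ] V →ₗ[ℝ] V →ₗ[ℝ] V →ₗ[ℝ] ℝ)
    (hR : IsAlgCurvatureTensor R)
    (hprod : ∀ x ∈ V₁, ∀ y ∈ V₂, ∀ z w : V, R x y z w = 0)
    (hnn : kNonnegSecondKind b R (k * (n - k) + 1)) :
    R = 0 := by
  classical
  haveI : FiniteDimensional ℝ V := Module.Finite.of_basis b.toBasis
  set m := n - k with hmdef
  set u' : OrthonormalBasis (Fin k) ℝ V₁ :=
    (stdOrthonormalBasis ℝ V₁).reindex (finCongr hdim₁) with hu'def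
  set v' : OrthonormalBasis (Fin m) ℝ V₂ :=
    (stdOrthonormalBasis ℝ V₂).reindex (finCongr hdim₂) with hv'def
  set u : Fin k → V := fun p => (u' p : V) with hudef
  set v : Fin m → V := fun q => (v' q : V) with hvdef
  have humem : ∀ p, u p ∈ V₁ := fun p => (u' p).2
  have hvmem : ∀ q, v q ∈ V₂ := fun q => (v' q).2
  have hu : ∀ p p', ⟪u p, u p'⟫ = if p = p' then 1 else 0 := by
    intro p p'
    have h := (orthonormal_iff_ite.mp u'.orthonormal) p p'
    rw [Submodule.coe_inner] at h
    exact h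
  have hv : ∀ q q', ⟪v q, v q'⟫ = if q = q' then 1 else 0 := by
    intro q q'
    have h := (orthonormal_iff_ite.mp v'.orthonormal) q q'
    rw [Submodule.coe_inner] at h
    exact h
  have huv : ∀ p q, ⟪u p, v q⟫ = 0 := fun p q => horth _ (humem p) _ (hvmem q)
  have hmix : ∀ p q (z w : V), R (u p) (v q) z w = 0 :=
    fun p q => hprod _ (humem p) _ (hvmem q)
  have hA1 : ∀ x y : V, x ∈ V₁ → y ∈ V₁ → ⟪x, y⟫ = 0 → 0 ≤ R x y x y := by
    intro x y hx hy hxy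
    refine secA b hR u v hu hv huv hmix hnn x y hxy (Or.inl fun q => ?_)
    exact ⟨by rw [real_inner_comm]; exact horth _ hx _ (hvmem q),
      by rw [real_inner_comm]; exact horth _ hy _ (hvmem q)⟩
  have hA2 : ∀ x y : V, x ∈ V₂ → y ∈ V₂ → ⟪x, y⟫ = 0 → 0 ≤ R x y x y := by
    intro x y hx hy hxy
    refine secA b hR u v hu hv huv hmix hnn x y hxy (Or.inr fun p => ?_)
    exact ⟨horth _ (humem p) _ hx, horth _ (humem p) _ hy⟩
  have hBnn : ∀ (N : ℕ) (g : Fin N → V),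
      ((∀ p, g p ∈ V₁) ∨ (∀ p, g p ∈ V₂)) →
      (∀ p p', ⟪g p, g p'⟫ = if p = p' then 1 else 0) →
      0 ≤ ∑ p, ∑ p', R (g p) (g p') (g p) (g p') := by
    intro N g hg hon
    refine Finset.sum_nonneg fun p _ => Finset.sum_nonneg fun p' _ => ?_
    by_cases hpp : p = p'
    · subst hpp; rw [Rxx hR]
    · rcases hg with hg | hg
      · exact hA1 _ _ (hg p) (hg p') (by rw [hon, if_neg hpp])
      · exact hA2 _ _ (hg p) (hg p') (by rw [hon, if_neg hpp])
  have hvu : ∀ q p, ⟪v q, u p⟫ = 0 := fun q p => by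
    rw [real_inner_comm]; exact huv p q
  have hCuv := secC b hR u v hu hv huv hmix hnn u v hu hv hvu huv hmix
  have hSu := hBnn k u (Or.inl humem) hu
  have hSv := hBnn m v (Or.inr hvmem) hv
  have hk' : (0:ℝ) < (k:ℝ) := by exact_mod_cast hk
  have hm' : (0:ℝ) < (m:ℝ) := by exact_mod_cast hnk
  have hSu0 : ∑ p, ∑ p', R (u p) (u p') (u p) (u p') = 0 := by
    nlinarith [hCuv, hSu, hSv, mul_pos hk' hk', mul_pos hm' hm']
  have hSv0 : ∑ q, ∑ q', R (v q) (v q') (v q) (v q') = 0 := by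
    nlinarith [hCuv, hSu, hSv, mul_pos hk' hk', mul_pos hm' hm']
  have hz1 : ∀ x y, x ∈ V₁ → y ∈ V₁ → R x y x y = 0 := by
    intro x y hx hy
    refine secZ hR V₁ hdim₁ hA1 ?_ x y hx hy
    intro w hwmem hwon
    have hCw := secC b hR u v hu hv huv hmix hnn w v hwon hv
      (fun q p => by rw [real_inner_comm]; exact horth _ (hwmem p) _ (hvmem q)) huv
      (fun p q z z' => hprod _ (hwmem p) _ (hvmem q) z z')
    rw [hSv0] at hCw
    nlinarith [hCw, mul_pos hm' hm']
  have hz2 : ∀ x y, x ∈ V₂ → y ∈ V₂ → R x y x y = 0 := by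
    intro x y hx hy
    refine secZ hR V₂ hdim₂ hA2 ?_ x y hx hy
    intro w hwmem hwon
    have hCw := secC b hR u v hu hv huv hmix hnn u w hu hwon hvu
      (fun p q => horth _ (humem p) _ (hwmem q))
      (fun p q z z' => hprod _ (humem p) _ (hwmem q) z z')
    rw [hSu0] at hCw
    nlinarith [hCw, mul_pos hk' hk']
  have hq1 := polarize hR V₁ hz1
  have hq2 := polarize hR V₂ hz2
  have hm12 : ∀ a c, a ∈ V₁ → c ∈ V₂ → ∀ d e, R a c d e = 0 :=
    fun a c ha hc => hprod a ha c hc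
  have hm21 : ∀ a c, a ∈ V₂ → c ∈ V₁ → ∀ d e, R a c d e = 0 := by
    intro a c ha hc d e
    rw [hR.1 a c d e, hm12 c a hc ha]; ring
  have hlast12 : ∀ a c d e : V, d ∈ V₁ → e ∈ V₂ → R a c d e = 0 := by
    intro a c d e hd he
    rw [hR.2.1]; exact hm12 d e hd he a c
  have hlast21 : ∀ a c d e : V, d ∈ V₂ → e ∈ V₁ → R a c d e = 0 := by
    intro a c d e hd he
    rw [hR.2.1]; exact hm21 d e hd he a c
  have h1122 : ∀ a c d e : V, a ∈ V₁ → c ∈ V₁ → d ∈ V₂ → e ∈ V₂ → R a c d e = 0 := by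
    intro a c d e ha hc hd he
    have hb := hR.2.2 a c d e
    have h2 : R c d a e = 0 := hm12 c d hc hd a e
    have h3 : R d a c e = 0 := hm21 d a hd ha c e
    linarith
  have h2211 : ∀ a c d e : V, a ∈ V₂ → c ∈ V₂ → d ∈ V₁ → e ∈ V₁ → R a c d e = 0 := by
    intro a c d e ha hc hd he
    rw [hR.2.1]; exact h1122 d e a c hd he ha hc
  have hz : ∀ a c d e : V, (a ∈ V₁ ∨ a ∈ V₂) → (c ∈ V₁ ∨ c ∈ V₂) →
      (d ∈ V₁ ∨ d ∈ V₂) → (e ∈ V₁ ∨ e ∈ V₂) → R a c d e = 0 := by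
    intro a c d e ha hc hd he
    rcases ha with ha | ha <;> rcases hc with hc | hc
    · rcases hd with hd | hd <;> rcases he with he | he
      · exact hq1 a c d e ha hc hd he
      · exact hlast12 a c d e hd he
      · exact hlast21 a c d e hd he
      · exact h1122 a c d e ha hc hd he
    · exact hm12 a c ha hc d e
    · exact hm21 a c ha hc d e
    · rcases hd with hd | hd <;> rcases he with he | he
      · exact h2211 a c d e ha hc hd he
      · exact hlast12 a c d e hd he
      · exact hlast21 a c d e hd he
      · exact hq2 a c d e ha hc hd he
  have hdecomp : ∀ x : V, ∃ x₁ ∈ V₁, ∃ x₂ ∈ V₂, x = x₁ + x₂ := by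
    intro x
    have hx : x ∈ V₁ ⊔ V₂ := by rw [hsup]; exact Submodule.mem_top
    obtain ⟨x₁, h1, x₂, h2, hxe⟩ := Submodule.mem_sup.mp hx
    exact ⟨x₁, h1, x₂, h2, hxe.symm⟩
  ext x y z w
  obtain ⟨x1, hx1, x2, hx2, hxe⟩ := hdecomp x
  obtain ⟨y1, hy1, y2, hy2, hye⟩ := hdecomp y
  obtain ⟨z1, hzc1, z2, hzc2, hze⟩ := hdecomp z
  obtain ⟨w1, hw1, w2, hw2, hwe⟩ := hdecomp w
  rw [hxe, hye, hze, hwe]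
  simp only [map_add, LinearMap.add_apply, LinearMap.zero_apply]
  rw [    hz x1 y1 z1 w1 (Or.inl hx1) (Or.inl hy1) (Or.inl hzc1) (Or.inl hw1),
    hz x1 y1 z1 w2 (Or.inl hx1) (Or.inl hy1) (Or.inl hzc1) (Or.inr hw2),
    hz x1 y1 z2 w1 (Or.inl hx1) (Or.inl hy1) (Or.inr hzc2) (Or.inl hw1),
    hz x1 y1 z2 w2 (Or.inl hx1) (Or.inl hy1) (Or.inr hzc2) (Or.inr hw2),
    hz x1 y2 z1 w1 (Or.inl hx1) (Or.inr hy2) (Or.inl hzc1) (Or.inl hw1),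
    hz x1 y2 z1 w2 (Or.inl hx1) (Or.inr hy2) (Or.inl hzc1) (Or.inr hw2),
    hz x1 y2 z2 w1 (Or.inl hx1) (Or.inr hy2) (Or.inr hzc2) (Or.inl hw1),
    hz x1 y2 z2 w2 (Or.inl hx1) (Or.inr hy2) (Or.inr hzc2) (Or.inr hw2),
    hz x2 y1 z1 w1 (Or.inr hx2) (Or.inl hy1) (Or.inl hzc1) (Or.inl hw1),
    hz x2 y1 z1 w2 (Or.inr hx2) (Or.inl hy1) (Or.inl hzc1) (Or.inr hw2),
    hz x2 y1 z2 w1 (Or.inr hx2) (Or.inl hy1) (Or.inr hzc2) (Or.inl hw1),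
    hz x2 y1 z2 w2 (Or.inr hx2) (Or.inl hy1) (Or.inr hzc2) (Or.inr hw2),
    hz x2 y2 z1 w1 (Or.inr hx2) (Or.inr hy2) (Or.inl hzc1) (Or.inl hw1),
    hz x2 y2 z1 w2 (Or.inr hx2) (Or.inr hy2) (Or.inl hzc1) (Or.inr hw2),
    hz x2 y2 z2 w1 (Or.inr hx2) (Or.inr hy2) (Or.inr hzc2) (Or.inl hw1),
    hz x2 y2 z2 w2 (Or.inr hx2) (Or.inr hy2) (Or.inr hzc2) (Or.inr hw2)]
end

section
/- Let (V,⟨·,·⟩) be a real inner product space of dimension 2m ≥ 4, let J : V → V be a linear map with J² = -id and ⟨Jx,Jy⟩ = ⟨x,y⟩ for all x,y, and let R be an algebraic curvature tensor on V satisfying the Kähler identity R(x,y,z,w) = R(x,y,Jz,Jw) for all x,y,z,w. Suppose there exists β > 1 such that for every orthonormal four-frame {e_1,e_2,e_3,e_4} in V, R_{1313} + R_{1414} + R_{2323} + R_{2424} - 2βR_{1234} ≥ 0. Then the orthogonal bisectional curvature of R vanishes: for all unit vectors X, Y ∈ V with ⟨X,Y⟩ = ⟨X,JY⟩ = 0,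 one has R(X,JX,Y,JY) = 0. -/
open scoped RealInnerProductSpace

variable {V : Type*} [NormedAddCommGroup V] [InnerProductSpace ℝ V]

set_option maxHeartbeats 1000000 in
theorem stmt_17 {m : ℕ} (hm : 2 ≤ m)
    (hdim : Module.finrank ℝ V = 2 * m)
    (J : V →ₗ[ℝ] V)
    (hJ2 : ∀ x : V, J (J x) = -x)
    (hJinner : ∀ x y : V, ⟪J x, J y⟫ = ⟪x, y⟫)
    (R : V →ₗ[ℝ] V →ₗ[ℝ] V →ₗ[ℝ] V →ₗ[ℝ] ℝ)
    (hR : IsAlgCurvatureTensor R)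
    (hKahler : ∀ x y z w : V, R x y z w = R x y (J z) (J w))
    (β : ℝ) (hβ : 1 < β)
    (hIC : ∀ e : Fin 4 → V, Orthonormal ℝ e →
      0 ≤ R (e 0) (e 2) (e 0) (e 2) + R (e 0) (e 3) (e 0) (e 3)
          + R (e 1) (e 2) (e 1) (e 2) + R (e 1) (e 3) (e 1) (e 3)
          - 2 * β * R (e 0) (e 1) (e 2) (e 3)) :
    ∀ X Y : V, ‖X‖ = 1 → ‖Y‖ = 1 → ⟪X, Y⟫ = 0 → ⟪X, J Y⟫ = 0 →
      R X (J X) Y (J Y) = 0 := by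
  obtain ⟨hA, hP, hB⟩ := hR
  intro X Y hX hY hXY hXJY
  -- inner product facts
  have hxJx : ∀ x : V, ⟪x, J x⟫ = 0 := by
    intro x
    have h1 : ⟪J x, J (J x)⟫ = ⟪x, J x⟫ := hJinner x (J x)
    rw [hJ2, inner_neg_right, real_inner_comm] at h1
    linarith
  have hXX : ⟪X, X⟫ = 1 := by
    rw [real_inner_self_eq_norm_mul_norm, hX]; norm_num
  have hYY : ⟪Y, Y⟫ = 1 := by
    rw [real_inner_self_eq_norm_mul_norm, hY]; norm_num
  have hJXJX : ⟪J X, J X⟫ = 1 := by rw [hJinner]; exact hXX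
  have hJYJY : ⟪J Y, J Y⟫ = 1 := by rw [hJinner]; exact hYY
  have hXJX : ⟪X, J X⟫ = 0 := hxJx X
  have hYJY : ⟪Y, J Y⟫ = 0 := hxJx Y
  have hJXY : ⟪J X, Y⟫ = 0 := by
    have h := hJinner (J X) Y
    rw [hJ2, inner_neg_left, hXJY] at h
    linarith
  have hJXJY : ⟪J X, J Y⟫ = 0 := by rw [hJinner]; exact hXY
  have hYX : ⟪Y, X⟫ = 0 := by rw [real_inner_comm]; exact hXY
  have hJYX : ⟪J Y, X⟫ = 0 := by rw [real_inner_comm]; exact hXJY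
  have hJXX : ⟪J X, X⟫ = 0 := by rw [real_inner_comm]; exact hXJX
  have hJYY : ⟪J Y, Y⟫ = 0 := by rw [real_inner_comm]; exact hYJY
  have hYJX : ⟪Y, J X⟫ = 0 := by rw [real_inner_comm]; exact hJXY
  have hJYJX : ⟪J Y, J X⟫ = 0 := by rw [real_inner_comm]; exact hJXJY
  -- derived curvature identities
  have hK2 : ∀ x y z w : V, R (J x) (J y) z w = R x y z w := by
    intro x y z w
    rw [hP (J x) (J y) z w, ← hKahler z w x y, hP z w x y]
  -- b' : R X (J Y) (J X) Y = - R X (J Y) X (J Y)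
  have hb' : R X (J Y) (J X) Y = - R X (J Y) X (J Y) := by
    have h := hKahler X (J Y) X (J Y)
    rw [hJ2] at h
    rw [map_neg] at h
    linarith
  have hJXYJXY : R (J X) Y (J X) Y = R X (J Y) X (J Y) := by
    have h := hKahler (J X) Y (J X) Y
    rw [hJ2] at h
    simp only [map_neg, LinearMap.neg_apply] at h
    rw [hP (J X) Y X (J Y), hb'] at h
    linarith
  have hJJ : R (J X) (J Y) (J X) (J Y) = R X Y X Y := by
    rw [hK2]
    exact (hKahler X Y X Y).symm
  -- Bianchi : c = a + b
  have hbianchi : R X (J X) Y (J Y) = R X Y X Y + R X (J Y) X (J Y) := by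
    have h := hB X (J X) Y (J Y)
    have h1 : R Y X (J X) (J Y) = - R X Y X Y := by
      have h2 := hKahler Y X X Y
      have h3 := hA Y X X Y
      linarith
    have h4 : R (J X) Y X (J Y) = - R X (J Y) X (J Y) := by
      rw [hP (J X) Y X (J Y)]; exact hb'
    linarith
  -- first frame
  have he1 : Orthonormal ℝ ![X, J X, Y, J Y] := by
    rw [orthonormal_iff_ite]
    intro i j
    fin_cases i <;> fin_cases j <;>
      simp [hXX, hYY, hJXJX, hJYJY, hXJX, hYJY, hJXY, hJXJY, hXY, hXJY,
        hYX, hJYX, hJXX, hJYY, hYJX, hJYJX, hX, hY,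
        show ‖J X‖ = 1 by rw [norm_eq_sqrt_real_inner, hJXJX, Real.sqrt_one],
        show ‖J Y‖ = 1 by rw [norm_eq_sqrt_real_inner, hJYJY, Real.sqrt_one]]
  have h1 := hIC ![X, J X, Y, J Y] he1
  simp only [Matrix.cons_val_zero, Matrix.cons_val_one, Matrix.head_cons,
    Matrix.cons_val_two, Matrix.tail_cons, Matrix.cons_val_three,
    Matrix.cons_val_fin_one] at h1
  -- second frame
  have he2 : Orthonormal ℝ ![X, J X, Y, -(J Y)] := by
    rw [orthonormal_iff_ite]
    intro i j
    fin_cases i <;> fin_cases j <;>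
      simp [hXX, hYY, hJXJX, hJYJY, hXJX, hYJY, hJXY, hJXJY, hXY, hXJY,
        hYX, hJYX, hJXX, hJYY, hYJX, hJYJX, hX, hY,
        show ‖J X‖ = 1 by rw [norm_eq_sqrt_real_inner, hJXJX, Real.sqrt_one],
        show ‖J Y‖ = 1 by rw [norm_eq_sqrt_real_inner, hJYJY, Real.sqrt_one]]
  have h2 := hIC ![X, J X, Y, -(J Y)] he2
  simp only [Matrix.cons_val_zero, Matrix.cons_val_one, Matrix.head_cons,
    Matrix.cons_val_two, Matrix.tail_cons, Matrix.cons_val_three,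
    Matrix.cons_val_fin_one, map_neg, LinearMap.neg_apply, neg_neg] at h2
  rw [hJXYJXY, hJJ, hbianchi] at h1 h2
  nlinarith [h1, h2, hβ]
end

section
/- Let (V,⟨·,·⟩) be a real inner product space of dimension 2m ≥ 4, let J : V → V be a linear map with J² = -id and ⟨Jx,Jy⟩ = ⟨x,y⟩ for all x,y, and let R be an algebraic curvature tensor on V satisfying the Kähler identity R(x,y,z,w) = R(x,y,Jz,Jw) for all x,y,z,w. Suppose there exists β > 1 such that for every orthonormal four-frame {e_1,e_2,e_3,e_4} in V, R_{1313} + R_{1414} + R_{2323} + R_{2424} - 2βR_{1234} ≥ 0. Then for all unit vectors Z, W ∈ V with ⟨Z,W⟩ = ⟨Z,JW⟩ = 0, one has R(Z,JZ,Z,JZ) + R(W,JW,W,JW) = 0. -/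
open scoped RealInnerProductSpace

variable {V : Type*} [NormedAddCommGroup V] [InnerProductSpace ℝ V]

set_option maxHeartbeats 1600000 in
private lemma pairC_aux (J : V →ₗ[ℝ] V)
    (hJ2 : ∀ x : V, J (J x) = -x)
    (hJinner : ∀ x y : V, ⟪J x, J y⟫ = ⟪x, y⟫)
    (R : V →ₗ[ℝ] V →ₗ[ℝ] V →ₗ[ℝ] V →ₗ[ℝ] ℝ)
    (hR : IsAlgCurvatureTensor R)
    (hKahler : ∀ x y z w : V, R x y z w = R x y (J z) (J w))
    (β : ℝ) (hβ : 1 < β)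
    (hIC : ∀ e : Fin 4 → V, Orthonormal ℝ e →
      0 ≤ R (e 0) (e 2) (e 0) (e 2) + R (e 0) (e 3) (e 0) (e 3)
          + R (e 1) (e 2) (e 1) (e 2) + R (e 1) (e 3) (e 1) (e 3)
          - 2 * β * R (e 0) (e 1) (e 2) (e 3))
    (Z W : V) (hZ : ‖Z‖ = 1) (hW : ‖W‖ = 1)
    (hZW : ⟪Z, W⟫ = 0) (hZJW : ⟪Z, J W⟫ = 0) :
    R Z (J Z) W (J W) = 0 := by
  obtain ⟨ha, hp, hbi⟩ := hR
  have hl : ∀ x y z w : V, R x y z w = - R x y w z := by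
    intro x y z w
    rw [hp x y z w, ha z w x y, hp w z x y]
  have hJJ : ∀ x y z w : V, R (J x) (J y) z w = R x y z w := by
    intro x y z w
    rw [hp (J x) (J y) z w, ← hKahler z w x y, hp z w x y]
  have hskew : ∀ x y : V, ⟪J x, y⟫ = - ⟪x, J y⟫ := by
    intro x y
    have := hJinner x (J y)
    rw [hJ2 y, inner_neg_right] at this
    linarith
  have hxJx : ∀ x : V, ⟪x, J x⟫ = 0 := by
    intro x
    have h1 := hskew x x
    have h2 : ⟪J x, x⟫ = ⟪x, J x⟫ := real_inner_comm _ _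
    linarith
  have iZZ : ⟪Z, Z⟫ = 1 := by rw [real_inner_self_eq_norm_mul_norm, hZ]; norm_num
  have iWW : ⟪W, W⟫ = 1 := by rw [real_inner_self_eq_norm_mul_norm, hW]; norm_num
  have iJZJZ : ⟪J Z, J Z⟫ = 1 := by rw [hJinner]; exact iZZ
  have iJWJW : ⟪J W, J W⟫ = 1 := by rw [hJinner]; exact iWW
  have iZJZ : ⟪Z, J Z⟫ = 0 := hxJx Z
  have iWJW : ⟪W, J W⟫ = 0 := hxJx W
  have iJZW : ⟪J Z, W⟫ = 0 := by
    rw [hskew]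
    simpa using hZJW
  have iJZJW : ⟪J Z, J W⟫ = 0 := by rw [hJinner]; exact hZW
  have iWZ : ⟪W, Z⟫ = 0 := by rw [real_inner_comm]; exact hZW
  have iJWZ : ⟪J W, Z⟫ = 0 := by rw [real_inner_comm]; exact hZJW
  have iWJZ : ⟪W, J Z⟫ = 0 := by rw [real_inner_comm]; exact iJZW
  have iJWJZ : ⟪J W, J Z⟫ = 0 := by rw [real_inner_comm]; exact iJZJW
  have iJZZ : ⟪J Z, Z⟫ = 0 := by rw [real_inner_comm]; exact iZJZ
  have iJWW : ⟪J W, W⟫ = 0 := by rw [real_inner_comm]; exact iWJW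
  have horth : Orthonormal ℝ ![Z, J Z, W, J W] := by
    rw [orthonormal_iff_ite]
    intro i j
    fin_cases i <;> fin_cases j <;>
      simp [iZZ, iWW, iJZJZ, iJWJW, iZJZ, iWJW, iJZW, iJZJW, hZW, hZJW,
        iWZ, iJWZ, iWJZ, iJWJZ, iJZZ, iJWW, hZ, hW,
        (by rw [norm_eq_sqrt_real_inner, iJZJZ, Real.sqrt_one] : ‖J Z‖ = 1),
        (by rw [norm_eq_sqrt_real_inner, iJWJW, Real.sqrt_one] : ‖J W‖ = 1)]
  have horth2 : Orthonormal ℝ ![Z, J Z, W, -(J W)] := by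
    rw [orthonormal_iff_ite]
    intro i j
    fin_cases i <;> fin_cases j <;>
      simp [iZZ, iWW, iJZJZ, iJWJW, iZJZ, iWJW, iJZW, iJZJW, hZW, hZJW,
        iWZ, iJWZ, iWJZ, iJWJZ, iJZZ, iJWW, hZ, hW,
        (by rw [norm_eq_sqrt_real_inner, iJZJZ, Real.sqrt_one] : ‖J Z‖ = 1),
        (by rw [norm_eq_sqrt_real_inner, iJWJW, Real.sqrt_one] : ‖J W‖ = 1)]
  have h1 := hIC ![Z, J Z, W, J W] horth
  have h2 := hIC ![Z, J Z, W, -(J W)] horth2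
  simp only [Matrix.cons_val_zero, Matrix.cons_val_one, Matrix.head_cons,
    Matrix.cons_val_two, Matrix.cons_val_three, Matrix.tail_cons,
    map_neg, LinearMap.neg_apply, neg_neg, mul_neg] at h1 h2
  set A := R Z W Z W with hA
  set B := R Z (J W) Z (J W) with hB
  set C := R Z (J Z) W (J W) with hC
  have r1 : R (J Z) (J W) (J Z) (J W) = A := by
    rw [hJJ Z W (J Z) (J W), ← hKahler Z W Z W]
  have rB' : R Z (J W) (J Z) W = - B := by
    have h := hKahler Z (J W) Z (J W)
    rw [hJ2 W] at h
    simp only [map_neg, neg_neg] at h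
    linarith [h]
  have r2 : R (J Z) W (J Z) W = B := by
    have h : R (J Z) (J (J W)) (J Z) W = R Z (J W) (J Z) W := hJJ Z (J W) (J Z) W
    rw [hJ2 W] at h
    simp only [map_neg, LinearMap.neg_apply] at h
    rw [rB'] at h
    linarith
  have rCAB : C = A + B := by
    have hb := hbi Z (J Z) W (J W)
    have t2 : R (J Z) W Z (J W) = R Z (J W) (J Z) W := hp _ _ _ _
    have t3 : R W Z (J Z) (J W) = - A := by
      have h := hKahler W Z Z W
      have h2 : R W Z Z W = - R Z W Z W := ha W Z Z W
      linarith
    rw [t2, rB', t3] at hb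
    linarith
  rw [r1, r2] at h1 h2
  have hβ' : (0:ℝ) < β - 1 := by linarith
  have hle : C ≤ 0 := by
    by_contra h
    push_neg at h
    nlinarith [mul_pos hβ' h, h1]
  have hge : 0 ≤ C := by
    by_contra h
    push_neg at h
    have h' : 0 < -C := by linarith
    nlinarith [mul_pos (show (0:ℝ) < β + 1 by linarith) h', h2]
  linarith


set_option maxHeartbeats 1600000 in
theorem stmt_18 {m : ℕ} (hm : 2 ≤ m)
    (hdim : Module.finrank ℝ V = 2 * m)
    (J : V →ₗ[ℝ] V)
    (hJ2 : ∀ x : V, J (J x) = -x)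
    (hJinner : ∀ x y : V, ⟪J x, J y⟫ = ⟪x, y⟫)
    (R : V →ₗ[ℝ] V →ₗ[ℝ] V →ₗ[ℝ] V →ₗ[ℝ] ℝ)
    (hR : IsAlgCurvatureTensor R)
    (hKahler : ∀ x y z w : V, R x y z w = R x y (J z) (J w))
    (β : ℝ) (hβ : 1 < β)
    (hIC : ∀ e : Fin 4 → V, Orthonormal ℝ e →
      0 ≤ R (e 0) (e 2) (e 0) (e 2) + R (e 0) (e 3) (e 0) (e 3)
          + R (e 1) (e 2) (e 1) (e 2) + R (e 1) (e 3) (e 1) (e 3)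
          - 2 * β * R (e 0) (e 1) (e 2) (e 3)) :
    ∀ Z W : V, ‖Z‖ = 1 → ‖W‖ = 1 → ⟪Z, W⟫ = 0 → ⟪Z, J W⟫ = 0 →
      R Z (J Z) Z (J Z) + R W (J W) W (J W) = 0 := by
  intro Z W hZ hW hZW hZJW
  obtain ⟨ha, hp, hbi⟩ := hR
  have hl : ∀ x y z w : V, R x y z w = - R x y w z := by
    intro x y z w
    rw [hp x y z w, ha z w x y, hp w z x y]
  have hdd : ∀ x y z w : V, R x y z w = R y x w z := by
    intro x y z w
    rw [ha x y z w, hl y x z w, neg_neg]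
  have hJJ : ∀ x y z w : V, R (J x) (J y) z w = R x y z w := by
    intro x y z w
    rw [hp (J x) (J y) z w, ← hKahler z w x y, hp z w x y]
  have hskew : ∀ x y : V, ⟪J x, y⟫ = - ⟪x, J y⟫ := by
    intro x y
    have := hJinner x (J y)
    rw [hJ2 y, inner_neg_right] at this
    linarith
  have hxJx : ∀ x : V, ⟪x, J x⟫ = 0 := by
    intro x
    have h1 := hskew x x
    have h2 : ⟪J x, x⟫ = ⟪x, J x⟫ := real_inner_comm _ _
    linarith
  have iZZ : ⟪Z, Z⟫ = 1 := by rw [real_inner_self_eq_norm_mul_norm, hZ]; norm_num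
  have iWW : ⟪W, W⟫ = 1 := by rw [real_inner_self_eq_norm_mul_norm, hW]; norm_num
  have iJWJW : ⟪J W, J W⟫ = 1 := by rw [hJinner]; exact iWW
  have iZJZ : ⟪Z, J Z⟫ = 0 := hxJx Z
  have iWJW : ⟪W, J W⟫ = 0 := hxJx W
  have iJZW : ⟪J Z, W⟫ = 0 := by rw [hskew]; simpa using hZJW
  have iJZJW : ⟪J Z, J W⟫ = 0 := by rw [hJinner]; exact hZW
  have iWZ : ⟪W, Z⟫ = 0 := by rw [real_inner_comm]; exact hZW
  have iJWZ : ⟪J W, Z⟫ = 0 := by rw [real_inner_comm]; exact hZJW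
  have iWJZ : ⟪W, J Z⟫ = 0 := by rw [real_inner_comm]; exact iJZW
  have iJWJZ : ⟪J W, J Z⟫ = 0 := by rw [real_inner_comm]; exact iJZJW
  have iZJJW : ⟪Z, J (J W)⟫ = 0 := by rw [hJ2, inner_neg_right, hZW, neg_zero]
  have iJWJJW : ⟪J W, J (J W)⟫ = 0 := by
    rw [hJ2, inner_neg_right, real_inner_comm, iWJW, neg_zero]
  -- the scaling constant
  set s : ℝ := Real.sqrt 2 with hs
  have hspos : (0:ℝ) < s := Real.sqrt_pos.mpr (by norm_num)
  have hs2 : s ^ 2 = 2 := Real.sq_sqrt (by norm_num)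
  -- norms of normalized sums
  have hone : ∀ u v : V, ⟪u, u⟫ = 1 → ⟪v, v⟫ = 1 → ⟪u, v⟫ = 0 →
      ‖s⁻¹ • (u + v)‖ = 1 := by
    intro u v h1 h2 h3
    have hsum : ‖u + v‖ ^ 2 = 2 := by
      rw [← real_inner_self_eq_norm_sq, real_inner_add_add_self, h1, h2, h3]; ring
    have huv : ‖u + v‖ = s := by
      have h := Real.sqrt_sq (norm_nonneg (u + v))
      rw [hsum] at h
      exact h.symm
    rw [norm_smul, huv, Real.norm_eq_abs, abs_inv, abs_of_pos hspos]
    exact inv_mul_cancel₀ hspos.ne'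
  have hone' : ∀ u v : V, ⟪u, u⟫ = 1 → ⟪v, v⟫ = 1 → ⟪u, v⟫ = 0 →
      ‖s⁻¹ • (u - v)‖ = 1 := by
    intro u v h1 h2 h3
    have h2' : ⟪-v, -v⟫ = (1:ℝ) := by rw [inner_neg_neg]; exact h2
    have h3' : ⟪u, -v⟫ = (0:ℝ) := by rw [inner_neg_right, h3, neg_zero]
    have := hone u (-v) h1 h2' h3'
    rwa [← sub_eq_add_neg] at this
  have key := pairC_aux J hJ2 hJinner R ⟨ha, hp, hbi⟩ hKahler β hβ hIC
  have hs4 : (s⁻¹) ^ 4 ≠ 0 := pow_ne_zero 4 (inv_ne_zero hspos.ne')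
  -- first auxiliary pair
  have e1 : R (Z + W) (J Z + J W) (Z - W) (J Z - J W) = 0 := by
    have hn1 : ‖s⁻¹ • (Z + W)‖ = 1 := hone Z W iZZ iWW hZW
    have hn2 : ‖s⁻¹ • (Z - W)‖ = 1 := hone' Z W iZZ iWW hZW
    have hi1 : ⟪s⁻¹ • (Z + W), s⁻¹ • (Z - W)⟫ = 0 := by
      simp [real_inner_smul_left, real_inner_smul_right, inner_add_left,
        inner_sub_right, iZZ, iWW, hZW, iWZ, hZ, hW]
    have hi2 : ⟪s⁻¹ • (Z + W), J (s⁻¹ • (Z - W))⟫ = 0 := by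
      simp [map_smul, map_sub, real_inner_smul_left, real_inner_smul_right,
        inner_add_left, inner_sub_right, iZJZ, hZJW, iWJZ, iWJW]
    have h0 := key _ _ hn1 hn2 hi1 hi2
    have hexp : R (s⁻¹ • (Z + W)) (J (s⁻¹ • (Z + W))) (s⁻¹ • (Z - W))
        (J (s⁻¹ • (Z - W))) =
        (s⁻¹) ^ 4 * R (Z + W) (J Z + J W) (Z - W) (J Z - J W) := by
      simp [map_smul, map_add, map_sub, LinearMap.smul_apply, LinearMap.add_apply,
        LinearMap.sub_apply, smul_eq_mul]
      ring
    rw [hexp] at h0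
    exact (mul_eq_zero.mp h0).resolve_left hs4
  -- second auxiliary pair
  have e2 : R (Z + J W) (J Z - W) (Z - J W) (J Z + W) = 0 := by
    have hn1 : ‖s⁻¹ • (Z + J W)‖ = 1 := hone Z (J W) iZZ iJWJW hZJW
    have hn2 : ‖s⁻¹ • (Z - J W)‖ = 1 := hone' Z (J W) iZZ iJWJW hZJW
    have hi1 : ⟪s⁻¹ • (Z + J W), s⁻¹ • (Z - J W)⟫ = 0 := by
      simp [real_inner_smul_left, real_inner_smul_right, inner_add_left,
        inner_sub_right, iZZ, iJWJW, hZJW, iJWZ, hZ,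
        (by rw [norm_eq_sqrt_real_inner, iJWJW, Real.sqrt_one] : ‖J W‖ = 1)]
    have hi2 : ⟪s⁻¹ • (Z + J W), J (s⁻¹ • (Z - J W))⟫ = 0 := by
      simp [map_smul, map_sub, real_inner_smul_left, real_inner_smul_right,
        inner_add_left, inner_sub_right, iZJZ, iZJJW, iJWJZ, iJWJJW]
    have h0 := key _ _ hn1 hn2 hi1 hi2
    have hexp : R (s⁻¹ • (Z + J W)) (J (s⁻¹ • (Z + J W))) (s⁻¹ • (Z - J W))
        (J (s⁻¹ • (Z - J W))) =
        (s⁻¹) ^ 4 * R (Z + J W) (J Z - W) (Z - J W) (J Z + W) := by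
      simp [map_smul, map_add, map_sub, hJ2, LinearMap.smul_apply,
        LinearMap.add_apply, LinearMap.sub_apply, LinearMap.neg_apply,
        map_neg, smul_eq_mul, sub_eq_add_neg]
      ring
    rw [hexp] at h0
    exact (mul_eq_zero.mp h0).resolve_left hs4
  -- expand both identities multilinearly
  simp only [map_add, map_sub, LinearMap.add_apply, LinearMap.sub_apply] at e1 e2
  -- symmetry relations among the atoms
  have p1 : R Z (J W) Z (J Z) = R Z (J Z) Z (J W) := hp _ _ _ _
  have p2 : R W (J Z) Z (J Z) = R Z (J Z) W (J Z) := hp _ _ _ _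
  have p3 : R W (J W) Z (J Z) = R Z (J Z) W (J W) := hp _ _ _ _
  have p4 : R W (J W) Z (J W) = R Z (J W) W (J W) := hp _ _ _ _
  have p5 : R W (J W) W (J Z) = R W (J Z) W (J W) := hp _ _ _ _
  have p6 : R W (J Z) Z (J W) = R Z (J W) W (J Z) := hp _ _ _ _
  have rB' : R Z (J W) (J Z) W = - R Z (J W) Z (J W) := by
    have h := hKahler Z (J W) Z (J W)
    rw [hJ2 W] at h
    simp only [map_neg, neg_neg] at h
    linarith [h]
  have p7 : R W (J Z) W (J Z) = R Z (J W) Z (J W) := by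
    have h1 : R W (J Z) W (J Z) = R (J Z) W (J Z) W := hdd _ _ _ _
    have h : R (J Z) (J (J W)) (J Z) W = R Z (J W) (J Z) W := hJJ Z (J W) (J Z) W
    rw [hJ2 W] at h
    simp only [map_neg, LinearMap.neg_apply] at h
    rw [rB'] at h
    linarith
  have p8 : R Z (J W) W (J Z) = R Z (J Z) W (J W) - R Z W Z W := by
    have hb := hbi Z (J W) W (J Z)
    have t2 : R (J W) W Z (J Z) = R Z (J Z) (J W) W := hp _ _ _ _
    have t2' : R Z (J Z) (J W) W = - R Z (J Z) W (J W) := hl _ _ _ _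
    have t3 : R W Z (J W) (J Z) = R Z W Z W := by
      have h := hKahler W Z W Z
      have h2 : R W Z W Z = R Z W Z W := hdd _ _ _ _
      linarith
    linarith [hb, t2, t2', t3]
  have q1 : R Z W Z (J Z) = R Z (J Z) Z W := hp _ _ _ _
  have q2 : R (J W) (J Z) Z (J Z) = R Z (J Z) (J W) (J Z) := hp _ _ _ _
  have q3 : R (J W) W Z (J Z) = R Z (J Z) (J W) W := hp _ _ _ _
  have q4 : R (J W) (J Z) Z W = R Z W (J W) (J Z) := hp _ _ _ _
  have q5 : R (J W) W Z W = R Z W (J W) W := hp _ _ _ _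
  have q6 : R (J W) W (J W) (J Z) = R (J W) (J Z) (J W) W := hp _ _ _ _
  have q7 : R Z (J Z) (J W) W = - R Z (J Z) W (J W) := hl _ _ _ _
  have q8 : R Z W (J W) (J Z) = - R Z W Z W := by
    have h1 : R Z W (J W) (J Z) = - R Z W (J Z) (J W) := hl _ _ _ _
    have h2 : R Z W Z W = R Z W (J Z) (J W) := hKahler _ _ _ _
    linarith
  have q9 : R (J W) (J Z) (J W) (J Z) = R Z W Z W := by
    have h1 : R (J W) (J Z) (J W) (J Z) = R (J Z) (J W) (J Z) (J W) := hdd _ _ _ _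
    have h2 : R (J Z) (J W) (J Z) (J W) = R Z W (J Z) (J W) := hJJ _ _ _ _
    have h3 : R Z W Z W = R Z W (J Z) (J W) := hKahler _ _ _ _
    linarith
  have q10 : R (J W) W (J W) W = R W (J W) W (J W) := hdd _ _ _ _
  have rCAB : R Z (J Z) W (J W) = R Z W Z W + R Z (J W) Z (J W) := by
    have hb := hbi Z (J Z) W (J W)
    have t2 : R (J Z) W Z (J W) = R Z (J W) (J Z) W := hp _ _ _ _
    have t3 : R W Z (J Z) (J W) = - R Z W Z W := by
      have h := hKahler W Z Z W
      have h2 : R W Z Z W = - R Z W Z W := ha W Z Z W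
      linarith
    linarith [hb, t2, rB', t3]
  linarith [e1, e2, p1, p2, p3, p4, p5, p6, p7, p8, q1, q2, q3, q4, q5, q6,
    q7, q8, q9, q10, rCAB]
end
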